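/- Let a, b, c ∈ ℤ and A = ℤ[X,Y]/(aX² + bXY + cY² − 1). Then A is a smooth ℤ-algebra if and only if b is odd, or a, b, c are all even. -/

import Mathlib

open MvPolynomial

set_option synthInstance.maxHeartbeats 1000000
set_option maxHeartbeats 2000000

/-- The polynomial `a X² + b XY + c Y² - 1` in `ℤ[X,Y]`. -/
noncomputable abbrev quadPoly (a b c : ℤ) : MvPolynomial (Fin 2) ℤ :=
  C a * X 0 ^ 2 + C b * X 0 * X 1 + C c * X 1 ^ 2 - 1

/-- The ring `A = ℤ[X,Y]/(a X² + b XY + c Y² - 1)`. -/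
noncomputable abbrev QuadAlg (a b c : ℤ) :=
  MvPolynomial (Fin 2) ℤ ⧸ Ideal.span {quadPoly a b c}

lemma keyExpand {R : Type*} [CommRing R] (a b c s t u x y : R)
    (h : u * (a*x^2 + b*x*y + c*y^2 - 1) = 1 + s*(2*a*x + b*y) + t*(b*x + 2*c*y)) :
    a*(x + s*(a*x^2 + b*x*y + c*y^2 - 1))^2
      + b*(x + s*(a*x^2 + b*x*y + c*y^2 - 1))*(y + t*(a*x^2 + b*x*y + c*y^2 - 1))
      + c*(y + t*(a*x^2 + b*x*y + c*y^2 - 1))^2 - 1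
      = (a*x^2 + b*x*y + c*y^2 - 1)^2 * (u + a*s^2 + b*s*t + c*t^2) := by
  linear_combination (-(a*x^2 + b*x*y + c*y^2 - 1)) * h

lemma smooth_of_exists (a b c : ℤ)
    (hex : ∃ s t u : MvPolynomial (Fin 2) ℤ,
      u * quadPoly a b c
        = 1 + s * (2 * C a * X 0 + C b * X 1) + t * (C b * X 0 + 2 * C c * X 1)) :
    Algebra.Smooth ℤ (QuadAlg a b c) := by
  obtain ⟨s, t, u, h⟩ := hex
  set q : MvPolynomial (Fin 2) ℤ := quadPoly a b c with hqdef
  set I : Ideal (MvPolynomial (Fin 2) ℤ) := Ideal.span {q} with hIdef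
  have hqI : q ∈ I := Ideal.mem_span_singleton_self q
  constructor
  · -- FormallySmooth
    set f : MvPolynomial (Fin 2) ℤ →ₐ[ℤ] QuadAlg a b c := Ideal.Quotient.mkₐ ℤ I with hfdef
    have hker : RingHom.ker f.toRingHom = I := Ideal.Quotient.mkₐ_ker ℤ I
    set J : Ideal (MvPolynomial (Fin 2) ℤ) := RingHom.ker f.toRingHom ^ 2 with hJdef
    have hq2J : q * q ∈ J := by
      rw [hJdef, hker, hIdef, sq]
      exact Ideal.mul_mem_mul hqI hqI
    set π : MvPolynomial (Fin 2) ℤ →ₐ[ℤ] (MvPolynomial (Fin 2) ℤ ⧸ J) :=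
      Ideal.Quotient.mkₐ ℤ J with hπdef
    set φ : MvPolynomial (Fin 2) ℤ →ₐ[ℤ] (MvPolynomial (Fin 2) ℤ ⧸ J) :=
      aeval ![π (X 0 + s * q), π (X 1 + t * q)] with hφdef
    have hφq : φ q = 0 := by
      have h1 : φ q = π (C a * (X 0 + s*q)^2 + C b * (X 0 + s*q) * (X 1 + t*q)
          + C c * (X 1 + t*q)^2 - 1) := by
        rw [hqdef]
        simp only [quadPoly, map_sub, map_add, map_mul, map_pow, map_one, aeval_X, aeval_C,
          hφdef, Matrix.cons_val_zero, Matrix.cons_val_one, Matrix.head_cons]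
        rw [show (algebraMap ℤ (MvPolynomial (Fin 2) ℤ ⧸ J)) a = π (C a) by
              simp [hπdef, Ideal.Quotient.mkₐ_eq_mk, ← MvPolynomial.algebraMap_eq,
                ← IsScalarTower.algebraMap_apply],
            show (algebraMap ℤ (MvPolynomial (Fin 2) ℤ ⧸ J)) b = π (C b) by
              simp [hπdef, Ideal.Quotient.mkₐ_eq_mk, ← MvPolynomial.algebraMap_eq,
                ← IsScalarTower.algebraMap_apply],
            show (algebraMap ℤ (MvPolynomial (Fin 2) ℤ ⧸ J)) c = π (C c) by
              simp [hπdef, Ideal.Quotient.mkₐ_eq_mk, ← MvPolynomial.algebraMap_eq,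
                ← IsScalarTower.algebraMap_apply]]
        rw [hqdef]
        simp only [quadPoly, map_sub, map_add, map_mul, map_pow, map_one]
        try ring
      have h2 : C a * (X 0 + s*q)^2 + C b * (X 0 + s*q) * (X 1 + t*q)
          + C c * (X 1 + t*q)^2 - 1 = (q*q) * (u + C a*s^2 + C b*s*t + C c*t^2) := by
        have := keyExpand (C a) (C b) (C c) s t u (X 0) (X 1) (by
          rw [hqdef] at h; linear_combination h)
        rw [hqdef]
        simp only [quadPoly]
        linear_combination this
      rw [h1, h2]
      exact (Ideal.Quotient.eq_zero_iff_mem).2 (Ideal.mul_mem_right _ _ hq2J)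
    have hφI : ∀ p ∈ I, φ p = 0 := by
      intro p hp
      rw [hIdef, Ideal.mem_span_singleton] at hp
      obtain ⟨r, rfl⟩ := hp
      rw [map_mul, hφq, zero_mul]
    refine Algebra.FormallySmooth.of_split f (Ideal.Quotient.liftₐ I φ hφI) ?_
    apply Ideal.Quotient.algHom_ext
    apply MvPolynomial.algHom_ext
    intro i
    have hmkq : Ideal.Quotient.mk I q = 0 := (Ideal.Quotient.eq_zero_iff_mem).2 hqI
    have hksl : ∀ p, f.kerSquareLift (π p) = f p := fun p => rfl
    have hfX : ∀ (p : MvPolynomial (Fin 2) ℤ) (i : Fin 2),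
        f (X i + p * q) = Ideal.Quotient.mk I (X i) := by
      intro p i
      show Ideal.Quotient.mkₐ ℤ I (X i + p * q) = Ideal.Quotient.mk I (X i)
      rw [Ideal.Quotient.mkₐ_eq_mk, map_add, map_mul, hmkq, mul_zero, add_zero]
    fin_cases i
    · show f.kerSquareLift (Ideal.Quotient.liftₐ I φ hφI (Ideal.Quotient.mk I (X 0)))
        = Ideal.Quotient.mk I (X 0)
      rw [Ideal.Quotient.liftₐ_apply]
      show f.kerSquareLift (φ (X 0)) = Ideal.Quotient.mk I (X 0)
      rw [show (φ (X 0) : MvPolynomial (Fin 2) ℤ ⧸ J) = π (X 0 + s * q) from by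
        simp [hφdef]]
      rw [hksl]
      exact hfX s 0
    · show f.kerSquareLift (Ideal.Quotient.liftₐ I φ hφI (Ideal.Quotient.mk I (X 1)))
        = Ideal.Quotient.mk I (X 1)
      rw [Ideal.Quotient.liftₐ_apply]
      show f.kerSquareLift (φ (X 1)) = Ideal.Quotient.mk I (X 1)
      rw [show (φ (X 1) : MvPolynomial (Fin 2) ℤ ⧸ J) = π (X 1 + t * q) from by
        simp [hφdef]]
      rw [hksl]
      exact hfX t 1
  · -- FinitePresentation
    exact Algebra.FinitePresentation.quotient (Submodule.fg_span_singleton q)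

lemma exists_of_odd (a b c : ℤ) (hb : Odd b) :
    ∃ s t u : MvPolynomial (Fin 2) ℤ,
      u * quadPoly a b c
        = 1 + s * (2 * C a * X 0 + C b * X 1) + t * (C b * X 0 + 2 * C c * X 1) := by
  obtain ⟨k, hk⟩ := hb
  have hCb : (C b : MvPolynomial (Fin 2) ℤ) = 2 * C k + 1 := by
    rw [hk]; push_cast [map_add, map_mul, map_one, map_ofNat]; ring
  set W1 : MvPolynomial (Fin 2) ℤ := C a * C b * X 0 + 2 * C k * (C k + 1) * X 1 with hW1
  set W2 : MvPolynomial (Fin 2) ℤ := C b * C c * X 1 + 2 * C k * (C k + 1) * X 0 with hW2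
  refine ⟨-(-(C a * X 0 + C b * X 1) * W2 * X 0 + C c * X 1 * (C b - W1 * X 0)),
    -((C a * X 0 + C b * X 1) * (C b - W2 * X 1) - C c * X 1 * (W1 * X 1)),
    2 * (C a * X 0 + C b * X 1) * W2 + 2 * C c * X 1 * W1 - 1, ?_⟩
  simp only [quadPoly, hW1, hW2, hCb]
  ring

lemma exists_of_even (a b c : ℤ) (ha : Even a) (hb : Even b) (hc : Even c) :
    ∃ s t u : MvPolynomial (Fin 2) ℤ,
      u * quadPoly a b c
        = 1 + s * (2 * C a * X 0 + C b * X 1) + t * (C b * X 0 + 2 * C c * X 1) := by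
  obtain ⟨a1, ha1⟩ := ha
  obtain ⟨b1, hb1⟩ := hb
  obtain ⟨c1, hc1⟩ := hc
  set W : MvPolynomial (Fin 2) ℤ := C a1 * X 0 ^ 2 + C b1 * X 0 * X 1 + C c1 * X 1 ^ 2 with hW
  refine ⟨-(W * X 0), -(W * X 1), -(2 * W + 1), ?_⟩
  have hCa : (C a : MvPolynomial (Fin 2) ℤ) = C a1 + C a1 := by rw [ha1, map_add]
  have hCb : (C b : MvPolynomial (Fin 2) ℤ) = C b1 + C b1 := by rw [hb1, map_add]
  have hCc : (C c : MvPolynomial (Fin 2) ℤ) = C c1 + C c1 := by rw [hc1, map_add]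
  simp only [quadPoly, hW, hCa, hCb, hCc]
  ring

noncomputable abbrev Lpoly (a c : ℤ) : MvPolynomial (Fin 2) (ZMod 2) :=
  C (a : ZMod 2) * X 0 + C (c : ZMod 2) * X 1 + 1

lemma two_eq_zero : (2 : MvPolynomial (Fin 2) (ZMod 2)) = 0 := by
  rw [show (2 : MvPolynomial (Fin 2) (ZMod 2)) = C (2 : ZMod 2) from (map_ofNat C 2).symm,
    show (2 : ZMod 2) = 0 by decide, map_zero]

lemma Lsq (a c : ℤ) :
    C (a : ZMod 2) * X 0 ^ 2 + C (c : ZMod 2) * X 1 ^ 2 - 1 = Lpoly a c ^ 2 := by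
  have hsq : ∀ z : ZMod 2, z * z = z := by decide
  have ha2 : (C ((a : ZMod 2)) : MvPolynomial (Fin 2) (ZMod 2)) * C ((a : ZMod 2))
      = C ((a : ZMod 2)) := by rw [← map_mul, hsq]
  have hc2 : (C ((c : ZMod 2)) : MvPolynomial (Fin 2) (ZMod 2)) * C ((c : ZMod 2))
      = C ((c : ZMod 2)) := by rw [← map_mul, hsq]
  simp only [Lpoly]
  linear_combination (-(X 0 ^ 2) : MvPolynomial (Fin 2) (ZMod 2)) * ha2
    + (-(X 1 ^ 2) : MvPolynomial (Fin 2) (ZMod 2)) * hc2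
    + (-(C ((a : ZMod 2)) * C ((c : ZMod 2)) * X 0 * X 1
      + C ((a : ZMod 2)) * X 0 + C ((c : ZMod 2)) * X 1 + 1)) * two_eq_zero

lemma even_iff_cast_eq_zero (a : ℤ) : Even a ↔ (a : ZMod 2) = 0 := by
  rw [ZMod.intCast_zmod_eq_zero_iff_dvd]
  constructor
  · exact Even.two_dvd
  · rintro ⟨k, hk⟩; exact ⟨k, by omega⟩

lemma map_quadPoly (a b c : ℤ) (hb : Even b) :
    MvPolynomial.map (Int.castRingHom (ZMod 2)) (quadPoly a b c) = Lpoly a c ^ 2 := by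
  have hb2 : ((b : ZMod 2)) = 0 := (even_iff_cast_eq_zero b).1 hb
  simp only [quadPoly, map_sub, map_add, map_mul, map_pow, map_one, MvPolynomial.map_C,
    MvPolynomial.map_X, Int.coe_castRingHom, hb2, map_zero, zero_mul, add_zero]
  exact Lsq a c

lemma Lpoly_ne_zero (a c : ℤ) : Lpoly a c ≠ 0 := by
  intro h
  have := congrArg (eval ![0, 0]) h
  simp [Lpoly] at this

lemma not_smooth (a b c : ℤ) (hb : Even b) (hac : ¬(Even a ∧ Even c)) :
    ¬ Algebra.FormallySmooth ℤ (QuadAlg a b c) := by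
  intro hsm
  set q : MvPolynomial (Fin 2) ℤ := quadPoly a b c with hqdef
  set L : MvPolynomial (Fin 2) (ZMod 2) := Lpoly a c with hLdef
  set K : Ideal (MvPolynomial (Fin 2) (ZMod 2)) := Ideal.span {L ^ 3} with hK
  set ρ : MvPolynomial (Fin 2) (ZMod 2) →+* MvPolynomial (Fin 2) (ZMod 2) ⧸ K :=
    Ideal.Quotient.mk K with hρ
  set I : Ideal (MvPolynomial (Fin 2) (ZMod 2) ⧸ K) := Ideal.span {ρ (L ^ 2)} with hIdef
  have hL4 : ρ (L ^ 2) ^ 2 = 0 := by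
    rw [← map_pow, ← pow_mul]
    exact Ideal.Quotient.eq_zero_iff_mem.2 (Ideal.mem_span_singleton.2 ⟨L, by ring⟩)
  have hInil : IsNilpotent I := by
    refine ⟨2, ?_⟩
    rw [hIdef, Ideal.span_singleton_pow, hL4]
    simp
  set μ : MvPolynomial (Fin 2) ℤ →+* MvPolynomial (Fin 2) (ZMod 2) :=
    MvPolynomial.map (Int.castRingHom (ZMod 2)) with hμ
  set ψ : MvPolynomial (Fin 2) ℤ →ₐ[ℤ] ((MvPolynomial (Fin 2) (ZMod 2) ⧸ K) ⧸ I) :=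
    ((Ideal.Quotient.mk I).comp (ρ.comp μ)).toIntAlgHom with hψ
  have hψq : ψ q = 0 := by
    show (Ideal.Quotient.mk I) (ρ (μ q)) = 0
    rw [hqdef, hμ, map_quadPoly a b c hb, ← hLdef]
    exact Ideal.Quotient.eq_zero_iff_mem.2 (Ideal.mem_span_singleton_self _)
  have hψI : ∀ p ∈ Ideal.span {q}, ψ p = 0 := by
    intro p hp
    obtain ⟨r, rfl⟩ := Ideal.mem_span_singleton.1 hp
    rw [map_mul, hψq]; exact zero_mul (ψ r)
  obtain ⟨g, hg⟩ := Algebra.FormallySmooth.exists_lift I hInil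
    (Ideal.Quotient.liftₐ (Ideal.span {q}) ψ hψI)
  set G : MvPolynomial (Fin 2) ℤ →+* MvPolynomial (Fin 2) (ZMod 2) ⧸ K :=
    (g : QuadAlg a b c →+* MvPolynomial (Fin 2) (ZMod 2) ⧸ K).comp
      (Ideal.Quotient.mk (Ideal.span {q})) with hG
  -- G of integer constants
  have hcast : ∀ n : ℤ, G (C n) = ρ (C ((n : ZMod 2))) := by
    intro n
    have h1 : (C n : MvPolynomial (Fin 2) ℤ) = (n : MvPolynomial (Fin 2) ℤ) :=
      eq_intCast (C : ℤ →+* MvPolynomial (Fin 2) ℤ) n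
    have h2 : (C ((n : ZMod 2)) : MvPolynomial (Fin 2) (ZMod 2))
        = (n : MvPolynomial (Fin 2) (ZMod 2)) :=
      eq_intCast ((C : ZMod 2 →+* MvPolynomial (Fin 2) (ZMod 2)).comp
        (Int.castRingHom (ZMod 2))) n
    rw [h1, h2, map_intCast, map_intCast]
  -- the relation satisfied by the lifted point
  have hGq : G q = 0 := by
    show g (Ideal.Quotient.mk _ q) = 0
    rw [Ideal.Quotient.eq_zero_iff_mem.2 (Ideal.mem_span_singleton_self q), map_zero]
  have hb2 : ((b : ZMod 2)) = 0 := (even_iff_cast_eq_zero b).1 hb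
  have hrel : ρ (C ((a : ZMod 2))) * G (X 0) ^ 2 + ρ (C ((c : ZMod 2))) * G (X 1) ^ 2 - 1
      = 0 := by
    rw [hqdef] at hGq
    simp only [quadPoly, map_sub, map_add, map_mul, map_pow, map_one] at hGq
    rw [hcast a, hcast b, hcast c, hb2, map_zero, map_zero, zero_mul, zero_mul, add_zero] at hGq
    exact hGq
  -- compatibility with σ
  have hcompat : ∀ i : Fin 2, Ideal.Quotient.mk I (G (X i)) = Ideal.Quotient.mk I (ρ (X i)) := by
    intro i
    have h := AlgHom.congr_fun hg (Ideal.Quotient.mk (Ideal.span {q}) (X i))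
    rw [Ideal.Quotient.liftₐ_apply] at h
    exact h.trans (by
      show (Ideal.Quotient.mk I) (ρ (μ (X i))) = _
      rw [hμ, MvPolynomial.map_X])
  have hmem : ∀ i : Fin 2, G (X i) - ρ (X i) ∈ I := by
    intro i
    rw [← Ideal.Quotient.eq_zero_iff_mem, map_sub, sub_eq_zero]
    exact hcompat i
  obtain ⟨u, hu⟩ := Ideal.mem_span_singleton'.1 (hmem 0)
  obtain ⟨v, hv⟩ := Ideal.mem_span_singleton'.1 (hmem 1)
  have hu' : G (X 0) = ρ (X 0) + ρ L ^ 2 * u := by rw [← map_pow]; linear_combination -hu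
  have hv' : G (X 1) = ρ (X 1) + ρ L ^ 2 * v := by rw [← map_pow]; linear_combination -hv
  -- the quadratic relation pushed to the quotient
  have hE : ρ (C ((a : ZMod 2))) * ρ (X 0) ^ 2 + ρ (C ((c : ZMod 2))) * ρ (X 1) ^ 2 - 1
      = ρ L ^ 2 := by
    have := congrArg ρ (Lsq a c)
    simpa only [map_sub, map_add, map_mul, map_pow, map_one, hLdef] using this
  have h2q : (2 : MvPolynomial (Fin 2) (ZMod 2) ⧸ K) = 0 := by
    have := congrArg ρ two_eq_zero
    exact (map_ofNat ρ 2).symm.trans this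
  have h3 : ρ L ^ 3 = 0 := by
    rw [← map_pow]
    exact Ideal.Quotient.eq_zero_iff_mem.2 (Ideal.mem_span_singleton_self _)
  rw [hu', hv'] at hrel
  have hl2 : ρ L ^ 2 = 0 := by
    linear_combination hrel - hE
      - (ρ L ^ 2 * (ρ (C ((a : ZMod 2))) * ρ (X 0) * u + ρ (C ((c : ZMod 2))) * ρ (X 1) * v)) * h2q
      - (ρ L * (ρ (C ((a : ZMod 2))) * u ^ 2 + ρ (C ((c : ZMod 2))) * v ^ 2)) * h3
  -- contradiction: L² ∈ (L³) is impossible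
  rw [← map_pow, Ideal.Quotient.eq_zero_iff_mem, hK, Ideal.mem_span_singleton] at hl2
  obtain ⟨w, hw⟩ := hl2
  have hfact : L ^ 2 * (1 - L * w) = 0 := by linear_combination hw
  rcases mul_eq_zero.mp hfact with h | h
  · exact Lpoly_ne_zero a c (by rwa [pow_eq_zero_iff (two_ne_zero)] at h)
  · have hLw : L * w = 1 := by linear_combination -h
    have hone : ∀ z : ZMod 2, z ≠ 0 → z = 1 := by decide
    by_cases hA : (a : ZMod 2) = 0
    · have hcE : ¬ Even c := fun hcc => hac ⟨(even_iff_cast_eq_zero a).2 hA, hcc⟩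
      have hC : (c : ZMod 2) = 1 :=
        hone _ (fun h0 => hcE ((even_iff_cast_eq_zero c).2 h0))
      have := congrArg (eval ![0, 1]) hLw
      rw [map_mul, map_one] at this
      have hevalL : eval ![0, 1] L = 0 := by
        simp [hLdef, Lpoly, hA, hC]
        decide
      rw [hevalL, zero_mul] at this
      exact absurd this (by decide)
    · have hA1 : (a : ZMod 2) = 1 := hone _ hA
      have := congrArg (eval ![1, 0]) hLw
      rw [map_mul, map_one] at this
      have hevalL : eval ![1, 0] L = 0 := by
        simp [hLdef, Lpoly, hA1]
        decide
      rw [hevalL, zero_mul] at this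
      exact absurd this (by decide)

theorem smooth_iff_odd_or_all_even (a b c : ℤ) :
    Algebra.Smooth ℤ (QuadAlg a b c) ↔ Odd b ∨ (Even a ∧ Even b ∧ Even c) := by
  constructor
  · intro hsm
    by_contra hcon
    push_neg at hcon
    obtain ⟨hob, h2⟩ := hcon
    have hb : Even b := Int.not_odd_iff_even.mp hob
    have hac : ¬(Even a ∧ Even c) := fun ⟨ha, hc⟩ => h2 ha hb hc
    exact not_smooth a b c hb hac hsm.formallySmooth
  · rintro (h | ⟨ha, hb, hc⟩)
    · exact smooth_of_exists a b c (exists_of_odd a b c h)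
    · exact smooth_of_exists a b c (exists_of_even a b c ha hb hc)
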